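/- There exist constants κ > 0 and C > 0 such that for every choice of signs ι₁, ι₂ ∈ {+1, −1} and all ξ, η, σ ∈ ℝ with |ξ − η − σ| ≤ κ / R(η,σ), one has |⟨ξ⟩ − ι₁⟨η⟩ − ι₂⟨σ⟩| ≥ (1/C) · (min(⟨ξ⟩, ⟨η⟩, ⟨σ⟩))⁻¹. -/

import Mathlib

/-- The Japanese bracket `⟨x⟩ = √(1 + x²)`. -/
noncomputable def jb (x : ℝ) : ℝ := Real.sqrt (1 + x ^ 2)

/-- The quadratic Klein–Gordon phase `Φ_{ι₁ι₂}(ξ,η,σ) = ⟨ξ⟩ − ι₁⟨η⟩ − ι₂⟨σ⟩`. -/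
noncomputable def Phi (ι₁ ι₂ : ℝ) (ξ η σ : ℝ) : ℝ := jb ξ - ι₁ * jb η - ι₂ * jb σ

/-- `R(η,σ) = ⟨η⟩⟨σ⟩/(⟨η⟩+⟨σ⟩)`, comparable to `min(⟨η⟩,⟨σ⟩)`. -/
noncomputable def Rf (η σ : ℝ) : ℝ := jb η * jb σ / (jb η + jb σ)

lemma jb_sq (x : ℝ) : jb x ^ 2 = 1 + x ^ 2 := Real.sq_sqrt (by positivity)

lemma one_le_jb (x : ℝ) : 1 ≤ jb x := by
  rw [show (1:ℝ) = Real.sqrt 1 by simp]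
  exact Real.sqrt_le_sqrt (by nlinarith [sq_nonneg x])

lemma jb_pos (x : ℝ) : 0 < jb x := lt_of_lt_of_le one_pos (one_le_jb x)

lemma abs_le_jb (x : ℝ) : |x| ≤ jb x := by
  rw [show |x| = Real.sqrt (x^2) by rw [Real.sqrt_sq_eq_abs]]
  exact Real.sqrt_le_sqrt (by linarith)

lemma jb_neg (x : ℝ) : jb (-x) = jb x := by simp [jb]

lemma jb_lipschitz (x y : ℝ) : |jb x - jb y| ≤ |x - y| := by
  have key : ∀ a b : ℝ, jb a ≤ jb b + |a - b| := by
    intro a b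
    have hb2 := jb_sq b
    have h2 : 1 + a^2 ≤ (jb b + |a-b|)^2 := by
      nlinarith [abs_nonneg (a-b), sq_abs (a-b), le_abs_self (b*(a-b)),
        abs_mul b (a-b), mul_le_mul_of_nonneg_right (abs_le_jb b) (abs_nonneg (a-b))]
    calc jb a = Real.sqrt (1+a^2) := rfl
      _ ≤ Real.sqrt ((jb b + |a-b|)^2) := Real.sqrt_le_sqrt h2
      _ = jb b + |a-b| := Real.sqrt_sq (by have := jb_pos b; have := abs_nonneg (a-b); linarith)
  rw [abs_sub_le_iff]
  refine ⟨by have := key x y; linarith, ?_⟩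
  have := key y x; rw [abs_sub_comm] at this; linarith

lemma jb_gap_aux (u v : ℝ) (hvu : jb v ≤ jb u) :
    1 ≤ 4 * jb v * (jb u + jb v - jb (u+v)) := by
  set b := jb u with hbdef
  set c := jb v with hcdef
  set d := jb (u+v) with hddef
  have hb2 : b^2 = 1 + u^2 := jb_sq u
  have hc2 : c^2 = 1 + v^2 := jb_sq v
  have hd2 : d^2 = 1 + (u+v)^2 := jb_sq (u+v)
  have hb1 : (1:ℝ) ≤ b := one_le_jb u
  have hc1 : (1:ℝ) ≤ c := one_le_jb v
  have hd1 : (1:ℝ) ≤ d := one_le_jb (u+v)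
  have huv : u * v ≤ b * c := by
    calc u*v ≤ |u*v| := le_abs_self _
      _ = |u| * |v| := abs_mul u v
      _ ≤ b*c := mul_le_mul (abs_le_jb u) (abs_le_jb v) (abs_nonneg v) (by positivity)
  have h2 : (b*c - u*v) * (b*c + u*v) = b^2 + v^2 := by
    linear_combination (c^2-1) * hb2 + (1+u^2) * hc2
  have h2c : b^2 ≤ (b*c - u*v) * (2*(b*c)) := by
    nlinarith [sq_nonneg (b*c - u*v), sq_nonneg v]
  have h3 : b ≤ 2*(b*c - u*v)*c := by nlinarith [h2c]
  have hg : (b+c-d)*(b+c+d) = 1 + 2*(b*c - u*v) := by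
    linear_combination hb2 + hc2 - hd2
  have hd_le : d ≤ b + c := by nlinarith [hg, huv]
  have hgpos : 0 ≤ b + c - d := by linarith
  have h4 : b + c ≤ c * (b+c-d) * (b+c+d) := by nlinarith [hg, h3]
  have h5 : c * (b+c-d) * (b+c+d) ≤ c * (b+c-d) * (4*b) :=
    mul_le_mul_of_nonneg_left (by linarith) (by nlinarith [hgpos, hc1])
  nlinarith [h4, h5, hb1, hc1]

lemma jb_gap (u v : ℝ) :
    1 ≤ 4 * min (jb u) (jb v) * (jb u + jb v - jb (u+v)) := by
  rcases le_total (jb v) (jb u) with h | h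
  · rw [min_eq_right h]; exact jb_gap_aux u v h
  · rw [min_eq_left h]
    have := jb_gap_aux v u h
    rw [add_comm v u] at this
    nlinarith [this]

lemma Rf_pos (η σ : ℝ) : 0 < Rf η σ := by
  unfold Rf
  have h1 := jb_pos η; have h2 := jb_pos σ
  positivity

lemma min_le_two_Rf (η σ : ℝ) : min (jb η) (jb σ) ≤ 2 * Rf η σ := by
  have h1 := jb_pos η; have h2 := jb_pos σ
  unfold Rf
  rw [mul_div_assoc', le_div_iff₀ (by linarith)]
  rcases le_total (jb η) (jb σ) with h | h
  · rw [min_eq_left h]; nlinarith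
  · rw [min_eq_right h]; nlinarith


set_option maxHeartbeats 1000000 in
/-- The nonresonance lower bound for the Klein–Gordon phase persists when `ξ` is
within distance `κ/R(η,σ)` of `η + σ`. -/
theorem phase_nonresonant_near_diagonal :
    ∃ κ C : ℝ, 0 < κ ∧ 0 < C ∧
      ∀ ι₁ ι₂ : ℝ, (ι₁ = 1 ∨ ι₁ = -1) → (ι₂ = 1 ∨ ι₂ = -1) →
        ∀ ξ η σ : ℝ, |ξ - η - σ| ≤ κ / Rf η σ →
          (1 / C) * (min (jb ξ) (min (jb η) (jb σ)))⁻¹ ≤ |Phi ι₁ ι₂ ξ η σ| := by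
  refine ⟨1/16, 8, by norm_num, by norm_num, ?_⟩
  intro ι₁ ι₂ h₁ h₂ ξ η σ hδ
  have ha1 : (1:ℝ) ≤ jb ξ := one_le_jb ξ
  have hb1 : (1:ℝ) ≤ jb η := one_le_jb η
  have hc1 : (1:ℝ) ≤ jb σ := one_le_jb σ
  set a := jb ξ with hadef
  set b := jb η with hbdef
  set c := jb σ with hcdef
  set m := min a (min b c) with hmdef
  have hm1 : (1:ℝ) ≤ m := le_min ha1 (le_min hb1 hc1)
  have hmpos : (0:ℝ) < m := by linarith
  have habs : (0:ℝ) ≤ |ξ - η - σ| := abs_nonneg _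
  -- the key δ bound: |δ| * min b c ≤ 1/8
  have hδ3 : |ξ - η - σ| * min b c ≤ 1/8 := by
    have h1 := min_le_two_Rf η σ
    have h2 := Rf_pos η σ
    calc |ξ - η - σ| * min b c ≤ (1/16 / Rf η σ) * (2 * Rf η σ) :=
          mul_le_mul hδ h1 (le_min (by linarith) (by linarith)) (by positivity)
      _ = 1/8 := by field_simp; ring
  -- reduce the goal
  rw [show (1/8 : ℝ) * m⁻¹ = 1/(8*m) by rw [one_div, one_div, mul_inv],
      div_le_iff₀ (by positivity)]
  -- goal : 1 ≤ |Phi ι₁ ι₂ ξ η σ| * (8 * m)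
  rcases h₁ with rfl | rfl <;> rcases h₂ with rfl | rfl
  · -- (+,+) : Phi = a - b - c
    have hP : Phi 1 1 ξ η σ = a - b - c := by simp [Phi]; rfl
    rw [hP]
    rcases le_total a (min b c) with hma | hma
    · -- a is the min : |Phi| ≥ b + c - a ≥ max b c ≥ 1
      have h1 : b + c - a ≤ |a - b - c| := by
        have := neg_le_abs (a - b - c); linarith
      have h2 : (1:ℝ) ≤ b + c - a := by
        rcases le_total b c with h | h
        · rw [min_eq_left h] at hma; linarith
        · rw [min_eq_right h] at hma; linarith
      have h3 : (1:ℝ) ≤ |a - b - c| := by linarith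
      have h4 : (1:ℝ)*1 ≤ |a - b - c| * m := mul_le_mul h3 hm1 zero_le_one (by linarith)
      nlinarith [h4]
    · -- min b c is the min
      have hmeq : m = min b c := min_eq_right hma
      have hgap := jb_gap η σ
      rw [← hbdef, ← hcdef] at hgap
      have hlip := jb_lipschitz ξ (η + σ)
      have hlip' : a - jb (η + σ) ≤ |ξ - η - σ| := by
        rw [show ξ - η - σ = ξ - (η + σ) by ring]
        have h := le_abs_self (a - jb (η+σ)); linarith [hlip]
      have hmn0 : (0:ℝ) ≤ min b c := le_min (by linarith) (by linarith)
      have k1 : min b c * (a - jb (η+σ)) ≤ min b c * |ξ - η - σ| :=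
        mul_le_mul_of_nonneg_left hlip' hmn0
      have k2 : b + c - a ≤ |a - b - c| := by
        have := neg_le_abs (a - b - c); linarith
      have k3 : min b c * (b + c - a) ≤ min b c * |a - b - c| :=
        mul_le_mul_of_nonneg_left k2 hmn0
      rw [hmeq]
      nlinarith [hgap, k1, k3, hδ3]
  · -- (+,-) : Phi = a - b + c
    have hP : Phi 1 (-1) ξ η σ = a - b + c := by simp [Phi]; rfl
    rw [hP]
    rcases le_total b (min a c) with hmb | hmb
    · have h2 : (1:ℝ) ≤ a - b + c := by
        rcases le_total a c with h | h
        · rw [min_eq_left h] at hmb; linarith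
        · rw [min_eq_right h] at hmb; linarith
      have h1 : a - b + c ≤ |a - b + c| := le_abs_self _
      have h3 : (1:ℝ) ≤ |a - b + c| := by linarith
      have h4 : (1:ℝ)*1 ≤ |a - b + c| * m := mul_le_mul h3 hm1 zero_le_one (by linarith)
      nlinarith [h4]
    · have hminac : min a c ≤ b := hmb
      have hmeq : m = min a c := by
        apply le_antisymm
        · exact le_min (min_le_left _ _) (le_trans (min_le_right _ _) (min_le_right _ _))
        · exact le_min (min_le_left _ _)
            (le_min (le_trans hminac (le_refl b)) (min_le_right _ _))
      have hmnbc : min a c ≤ min b c := le_min hminac (min_le_right _ _)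
      have hδ4 : |ξ - η - σ| * min a c ≤ 1/8 := by
        calc |ξ - η - σ| * min a c ≤ |ξ - η - σ| * min b c :=
              mul_le_mul_of_nonneg_left hmnbc habs
          _ ≤ 1/8 := hδ3
      have hgap := jb_gap ξ (-σ)
      rw [jb_neg, show ξ + -σ = ξ - σ by ring, ← hadef, ← hcdef] at hgap
      -- hgap : 1 ≤ 4 * min a c * (a + c - jb (ξ - σ))
      have hlip := jb_lipschitz η (ξ - σ)
      have hlip' : b - jb (ξ - σ) ≤ |ξ - η - σ| := by
        rw [show ξ - η - σ = -(η - (ξ - σ)) by ring, abs_neg]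
        have h := le_abs_self (b - jb (ξ - σ)); linarith [hlip]
      have hmn0 : (0:ℝ) ≤ min a c := le_min (by linarith) (by linarith)
      have k1 : min a c * (b - jb (ξ-σ)) ≤ min a c * |ξ - η - σ| :=
        mul_le_mul_of_nonneg_left hlip' hmn0
      have k2 : a - b + c ≤ |a - b + c| := le_abs_self _
      have k3 : min a c * (a - b + c) ≤ min a c * |a - b + c| :=
        mul_le_mul_of_nonneg_left k2 hmn0
      rw [hmeq]
      nlinarith [hgap, k1, k3, hδ4]
  · -- (-,+) : Phi = a + b - c
    have hP : Phi (-1) 1 ξ η σ = a + b - c := by simp [Phi]; rfl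
    rw [hP]
    rcases le_total c (min a b) with hmc | hmc
    · have h2 : (1:ℝ) ≤ a + b - c := by
        rcases le_total a b with h | h
        · rw [min_eq_left h] at hmc; linarith
        · rw [min_eq_right h] at hmc; linarith
      have h1 : a + b - c ≤ |a + b - c| := le_abs_self _
      have h3 : (1:ℝ) ≤ |a + b - c| := by linarith
      have h4 : (1:ℝ)*1 ≤ |a + b - c| * m := mul_le_mul h3 hm1 zero_le_one (by linarith)
      nlinarith [h4]
    · have hminab : min a b ≤ c := hmc
      have hmeq : m = min a b := by
        apply le_antisymm
        · exact le_min (min_le_left _ _) (le_trans (min_le_right _ _) (min_le_left _ _))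
        · exact le_min (min_le_left _ _)
            (le_min (min_le_right _ _) hminab)
      have hmnbc : min a b ≤ min b c := le_min (min_le_right _ _) hminab
      have hδ4 : |ξ - η - σ| * min a b ≤ 1/8 := by
        calc |ξ - η - σ| * min a b ≤ |ξ - η - σ| * min b c :=
              mul_le_mul_of_nonneg_left hmnbc habs
          _ ≤ 1/8 := hδ3
      have hgap := jb_gap ξ (-η)
      rw [jb_neg, show ξ + -η = ξ - η by ring, ← hadef, ← hbdef] at hgap
      have hlip := jb_lipschitz σ (ξ - η)
      have hlip' : c - jb (ξ - η) ≤ |ξ - η - σ| := by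
        rw [show ξ - η - σ = -(σ - (ξ - η)) by ring, abs_neg]
        have h := le_abs_self (c - jb (ξ - η)); linarith [hlip]
      have hmn0 : (0:ℝ) ≤ min a b := le_min (by linarith) (by linarith)
      have k1 : min a b * (c - jb (ξ-η)) ≤ min a b * |ξ - η - σ| :=
        mul_le_mul_of_nonneg_left hlip' hmn0
      have k2 : a + b - c ≤ |a + b - c| := le_abs_self _
      have k3 : min a b * (a + b - c) ≤ min a b * |a + b - c| :=
        mul_le_mul_of_nonneg_left k2 hmn0
      rw [hmeq]
      nlinarith [hgap, k1, k3, hδ4]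
  · -- (-,-) : Phi = a + b + c ≥ 3
    have hP : Phi (-1) (-1) ξ η σ = a + b + c := by simp [Phi]; rfl
    rw [hP]
    have h1 : a + b + c ≤ |a + b + c| := le_abs_self _
    have h3 : (1:ℝ) ≤ |a + b + c| := by linarith
    have h4 : (1:ℝ)*1 ≤ |a + b + c| * m := mul_le_mul h3 hm1 zero_le_one (by linarith)
    nlinarith [h4]
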